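/- Let p ∈ [1/2, 1], q ∈ (0,1) and c ≥ 0. If kl(p,q) ≤ c, then q ≥ (1/4)·exp(−2c). -/
import Mathlib

/-- Kullback–Leibler divergence between Bernoulli distributions of parameters `p` and `q`
(the convention `0 · log(0/x) = 0` holds automatically since `0 * x = 0` in `ℝ`). -/
noncomputable def klBer (p q : ℝ) : ℝ :=
  p * Real.log (p / q) + (1 - p) * Real.log ((1 - p) / (1 - q))

/-- If `p ∈ [1/2, 1]`, `q ∈ (0,1)`, `c ≥ 0` and `kl(p,q) ≤ c`, then
`q ≥ (1/4)·exp(−2c)`. -/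
theorem klBer_le_imp (p q c : ℝ) (hp : p ∈ Set.Icc (1 / 2 : ℝ) 1)
    (hq : q ∈ Set.Ioo (0 : ℝ) 1) (hc : 0 ≤ c) (h : klBer p q ≤ c) :
    (1 / 4 : ℝ) * Real.exp (-2 * c) ≤ q := by
  obtain ⟨hp1, hp2⟩ := hp
  obtain ⟨hq1, hq2⟩ := hq
  have hp0 : 0 < p := by linarith
  -- first term expanded
  have hl1 : Real.log (p / q) = Real.log p - Real.log q :=
    Real.log_div (ne_of_gt hp0) (ne_of_gt hq1)
  -- second term bound
  have h2 : (1 - p) * Real.log (1 - p) ≤ (1 - p) * Real.log ((1 - p) / (1 - q)) := by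
    rcases eq_or_lt_of_le hp2 with h1 | h1
    · simp [← h1]
    · have h1p : 0 < 1 - p := by linarith
      have h1q : 0 < 1 - q := by linarith
      rw [Real.log_div (ne_of_gt h1p) (ne_of_gt h1q)]
      have : Real.log (1 - q) ≤ 0 := Real.log_nonpos (by linarith) (by linarith)
      nlinarith
  -- entropy bound
  have hent : -(Real.log 2) ≤ p * Real.log p + (1 - p) * Real.log (1 - p) := by
    have := Real.binEntropy_le_log_two (p := p)
    rw [Real.binEntropy, Real.log_inv, Real.log_inv] at this
    linarith
  have hkey : -(c + Real.log 2) ≤ p * Real.log q := by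
    have : klBer p q = p * Real.log p - p * Real.log q
        + (1 - p) * Real.log ((1 - p) / (1 - q)) := by
      rw [klBer, hl1]; ring
    nlinarith [h, h2, hent]
  have hlogq : Real.log q ≤ 0 := Real.log_nonpos (le_of_lt hq1) (le_of_lt hq2)
  have h3 : -2 * c - 2 * Real.log 2 ≤ Real.log q := by nlinarith
  have h4 : Real.exp (-2 * c - 2 * Real.log 2) ≤ q := by
    calc Real.exp (-2 * c - 2 * Real.log 2) ≤ Real.exp (Real.log q) :=
          Real.exp_le_exp.mpr h3
      _ = q := Real.exp_log hq1
  have h5 : Real.exp (-2 * c - 2 * Real.log 2) = 1 / 4 * Real.exp (-2 * c) := by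
    rw [sub_eq_add_neg, Real.exp_add]
    have : Real.exp (-(2 * Real.log 2)) = 1 / 4 := by
      rw [Real.exp_neg, two_mul, Real.exp_add, Real.exp_log (by norm_num)]
      norm_num
    rw [this]; ring
  linarith [h4, h5.symm.le]
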